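/- Assume the anisotropic ADMM scheme, and assume in addition: (A.1) the sequences (β_t^k) and (β_s^k) are increasing, the series ∑_{k≥1} √(k/β_t^k) and ∑_{k≥1} √(k/β_s^k) converge, and β_s^k/β_t^k converges to some c ≠ 0; (A.2) the matrices D_h and D_v are injective (full rank). Then the sequences (t^k), (s^k) and (u^k) converge: there exist t*, s*, u* ∈ ℝ^N with t^k → t*, s^k → s*, u^k → u*, and moreover t* = D_h u* and s* = D_v u*. -/

import Mathlib

open Matrix Filter Topology

/-- Euclidean norm of a vector in `ℝ^n`. -/
noncomputable def eucNorm {n : ℕ} (v : Fin n → ℝ) : ℝ :=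
  Real.sqrt (∑ i, (v i) ^ 2)

/-- ℓ⁰ "norm": number of nonzero entries of a vector. -/
noncomputable def l0 {n : ℕ} (v : Fin n → ℝ) : ℕ :=
  (Finset.univ.filter fun i => v i ≠ 0).card

/-- Isotropic ℓ⁰ count: number of indices where the pair of entries is nonzero. -/
noncomputable def l02 {n : ℕ} (zh zv : Fin n → ℝ) : ℕ :=
  (Finset.univ.filter fun i => zh i ≠ 0 ∨ zv i ≠ 0).card

/-- convergence of the anisotropic ADMM scheme under the growth
conditions (A.1) and full-rank conditions (A.2). -/
lemma eucNorm_eq {n : ℕ} (v : Fin n → ℝ) :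
    eucNorm v = ‖(WithLp.equiv 2 (Fin n → ℝ)).symm v‖ := by
  rw [EuclideanSpace.norm_eq]
  simp [eucNorm, Real.norm_eq_abs, sq_abs]

lemma eucNorm_nonneg {n : ℕ} (v : Fin n → ℝ) : 0 ≤ eucNorm v := Real.sqrt_nonneg _

lemma eucNorm_neg {n : ℕ} (v : Fin n → ℝ) : eucNorm (-v) = eucNorm v := by
  simp [eucNorm]

lemma eucNorm_add_le {n : ℕ} (v w : Fin n → ℝ) : eucNorm (v + w) ≤ eucNorm v + eucNorm w := by
  simp only [eucNorm_eq, WithLp.equiv_symm_apply, WithLp.toLp_add]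
  exact norm_add_le _ _

lemma eucNorm_sub_le {n : ℕ} (v w : Fin n → ℝ) : eucNorm (v - w) ≤ eucNorm v + eucNorm w := by
  simp only [eucNorm_eq, WithLp.equiv_symm_apply, WithLp.toLp_sub]
  exact norm_sub_le _ _

lemma eucNorm_smul {n : ℕ} (c : ℝ) (v : Fin n → ℝ) : eucNorm (c • v) = |c| * eucNorm v := by
  simp only [eucNorm_eq, WithLp.equiv_symm_apply, WithLp.toLp_smul, norm_smul, Real.norm_eq_abs]

lemma eucNorm_zero {n : ℕ} : eucNorm (0 : Fin n → ℝ) = 0 := by simp [eucNorm]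

lemma sqrt_bound {x a b : ℝ} (hx : 0 ≤ x) (ha : 0 ≤ a) (h : x ^ 2 ≤ a * b) :
    x ≤ Real.sqrt a * Real.sqrt b := by
  calc x = Real.sqrt (x ^ 2) := (Real.sqrt_sq hx).symm
    _ ≤ Real.sqrt (a * b) := Real.sqrt_le_sqrt h
    _ = _ := Real.sqrt_mul ha b

set_option maxHeartbeats 1000000 in
lemma aux_converge {N : ℕ} (D : Matrix (Fin N) (Fin N) ℝ) (t u l : ℕ → Fin N → ℝ)
    (β : ℕ → ℝ) (hβ : ∀ k, 0 < β k) (hmono : Monotone β)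
    (hsum : Summable fun k : ℕ => Real.sqrt ((k : ℝ) / β k))
    (μN C : ℝ) (hμN : 0 ≤ μN) (hC : 0 ≤ C)
    (hB : ∀ k, β k / 2 * eucNorm (t (k + 1) - (D.mulVec (u k) + (β k)⁻¹ • l k)) ^ 2 ≤ μN)
    (hA : ∀ k, β k * eucNorm (D.mulVec (u (k + 1)) - (t (k + 1) - (β k)⁻¹ • l k)) ^ 2
        ≤ C * (k + 1))
    (hl : ∀ k, l (k + 1) = l k - β k • (t (k + 1) - D.mulVec (u (k + 1))))
    (hD : Function.Injective D.mulVec) :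
    ∃ tstar ustar : Fin N → ℝ,
      Tendsto t atTop (𝓝 tstar) ∧ Tendsto u atTop (𝓝 ustar) ∧ tstar = D.mulVec ustar := by
  have hβne : ∀ k, (β k : ℝ) ≠ 0 := fun k => (hβ k).ne'
  set q : ℕ → ℝ := fun k => Real.sqrt ((k : ℝ) / β k) with hq
  have hq0 : ∀ k, 0 ≤ q k := fun k => Real.sqrt_nonneg _
  -- the two residuals
  set vt : ℕ → Fin N → ℝ := fun k => D.mulVec (u (k + 1)) - (t (k + 1) - (β k)⁻¹ • l k)
    with hvt
  set ct : ℕ → Fin N → ℝ := fun k => t (k + 1) - (D.mulVec (u k) + (β k)⁻¹ • l k) with hct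
  -- bounds on residual norms,
  have hvtb : ∀ k, 1 ≤ k → eucNorm (vt k) ≤ Real.sqrt (2 * C) * q k := by
    intro k hk
    have h1 : eucNorm (vt k) ^ 2 ≤ (2 * C) * ((k : ℝ) / β k) := by
      rw [mul_div_assoc'] at *
      rw [le_div_iff₀ (hβ k)]
      have h2 := hA k
      have hk' : (1 : ℝ) ≤ (k : ℝ) := by exact_mod_cast hk
      nlinarith [hA k]
    exact sqrt_bound (eucNorm_nonneg _) (by linarith) h1
  have hctb : ∀ k, 1 ≤ k → eucNorm (ct k) ≤ Real.sqrt (2 * μN) * q k := by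
    intro k hk
    have h1 : eucNorm (ct k) ^ 2 ≤ (2 * μN) * ((k : ℝ) / β k) := by
      rw [mul_div_assoc']
      rw [le_div_iff₀ (hβ k)]
      have hk' : (1 : ℝ) ≤ (k : ℝ) := by exact_mod_cast hk
      nlinarith [hB k]
    exact sqrt_bound (eucNorm_nonneg _) (by linarith) h1
  -- dual update in terms of vt
  have hl2 : ∀ k, l (k + 1) = β k • vt k := by
    intro k
    funext i
    have : (β k)⁻¹ * β k = 1 := inv_mul_cancel₀ (hβne k)
    simp only [hl k, hvt, Pi.sub_apply, Pi.smul_apply, Pi.add_apply, smul_eq_mul]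
    have h3 : β k * ((β k)⁻¹ * l k i) = l k i := by
      rw [← mul_assoc, mul_inv_cancel₀ (hβne k), one_mul]
    linear_combination -h3
  have hlnorm : ∀ k, eucNorm (l (k + 1)) = β k * eucNorm (vt k) := by
    intro k
    rw [hl2 k, eucNorm_smul, abs_of_pos (hβ k)]
  -- drift bound
  have hdrift : ∀ k, 1 ≤ k →
      eucNorm (D.mulVec (u (k + 1)) - D.mulVec (u k))
        ≤ (Real.sqrt (2 * C) + Real.sqrt (2 * μN)) * q k := by
    intro k hk
    have hsplit : D.mulVec (u (k + 1)) - D.mulVec (u k) = vt k + ct k := by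
      show _ = (D.mulVec (u (k + 1)) - (t (k + 1) - (β k)⁻¹ • l k))
        + (t (k + 1) - (D.mulVec (u k) + (β k)⁻¹ • l k))
      abel
    rw [hsplit, add_mul]
    exact le_trans (eucNorm_add_le _ _) (add_le_add (hvtb k hk) (hctb k hk))
  -- bound on enorm (l (k+1)) ^ 2
  have hLb : ∀ k, eucNorm (l (k + 1)) ^ 2 ≤ C * ((k : ℝ) + 1) * β k := by
    intro k
    rw [hlnorm k]
    nlinarith [hA k, hβ k, eucNorm_nonneg (vt k)]
  -- t - D u goes to zero
  have htu2 : ∀ k : ℕ, eucNorm (t (k + 2) - D.mulVec (u (k + 2)))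
      ≤ (Real.sqrt C + Real.sqrt (2 * C)) * q (k + 1) := by
    intro k
    have hsplit : t (k + 2) - D.mulVec (u (k + 2))
        = (β (k + 1))⁻¹ • l (k + 1) - vt (k + 1) := by
      show _ = (β (k + 1))⁻¹ • l (k + 1)
        - (D.mulVec (u (k + 1 + 1)) - (t (k + 1 + 1) - (β (k + 1))⁻¹ • l (k + 1)))
      abel
    rw [hsplit, add_mul]
    refine le_trans (eucNorm_sub_le _ _) (add_le_add ?_ (hvtb (k + 1) le_add_self))
    -- first piece
    have hb1 : 0 < β (k + 1) := hβ (k + 1)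
    have hmk : β k ≤ β (k + 1) := hmono (Nat.le_succ k)
    have hx : eucNorm ((β (k + 1))⁻¹ • l (k + 1)) = (β (k + 1))⁻¹ * eucNorm (l (k + 1)) := by
      rw [eucNorm_smul, abs_of_pos (by positivity)]
    have h6 : eucNorm (l (k + 1)) ^ 2 ≤ C * ((k : ℝ) + 1) * β (k + 1) := by
      refine le_trans (hLb k) ?_
      have : 0 ≤ C * ((k : ℝ) + 1) := by positivity
      nlinarith
    have h5 : eucNorm ((β (k + 1))⁻¹ • l (k + 1)) ^ 2
        ≤ C * (((k : ℝ) + 1) / β (k + 1)) := by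
      rw [hx, mul_pow]
      calc ((β (k + 1))⁻¹) ^ 2 * eucNorm (l (k + 1)) ^ 2
          ≤ ((β (k + 1))⁻¹) ^ 2 * (C * ((k : ℝ) + 1) * β (k + 1)) := by
            exact mul_le_mul_of_nonneg_left h6 (by positivity)
        _ = C * (((k : ℝ) + 1) / β (k + 1)) := by
            field_simp
    have := sqrt_bound (eucNorm_nonneg _) hC h5
    calc eucNorm ((β (k + 1))⁻¹ • l (k + 1))
        ≤ Real.sqrt C * Real.sqrt (((k : ℝ) + 1) / β (k + 1)) := this
      _ = Real.sqrt C * q (k + 1) := by rw [hq]; push_cast; ring_nf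
  -- the sequence D u^k is Cauchy in Euclidean space
  set K : ℝ := Real.sqrt (2 * C) + Real.sqrt (2 * μN) with hK
  set F : ℕ → EuclideanSpace ℝ (Fin N) :=
    fun k => (WithLp.equiv 2 (Fin N → ℝ)).symm (D.mulVec (u k)) with hF
  have hdist : ∀ k, 1 ≤ k → dist (F k) (F (k + 1)) ≤ K * q k := by
    intro k hk
    rw [dist_eq_norm]
    have : F k - F (k + 1)
        = (WithLp.equiv 2 (Fin N → ℝ)).symm (D.mulVec (u k) - D.mulVec (u (k + 1))) := by
      rw [hF]; simp
    rw [this, ← eucNorm_eq]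
    have : D.mulVec (u k) - D.mulVec (u (k + 1))
        = -(D.mulVec (u (k + 1)) - D.mulVec (u k)) := by abel
    rw [this, eucNorm_neg]
    exact hdrift k hk
  have hsumK : Summable (fun k : ℕ => K * q (k + 1)) :=
    (summable_nat_add_iff 1).mpr (hsum.mul_left K)
  have h1 : Summable (fun k : ℕ => dist (F (k + 1)) (F (k + 1 + 1))) :=
    Summable.of_nonneg_of_le (fun k => dist_nonneg)
      (fun k => hdist (k + 1) le_add_self) hsumK
  have hsumd : Summable fun k => dist (F k) (F (k + 1)) :=
    (summable_nat_add_iff (f := fun k => dist (F k) (F (k + 1))) 1).mp h1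
  have hcauchy : CauchySeq F := cauchySeq_of_summable_dist hsumd
  obtain ⟨w, hw⟩ := cauchySeq_tendsto_of_complete hcauchy
  -- back to the product topology
  set φ : EuclideanSpace ℝ (Fin N) ≃L[ℝ] (Fin N → ℝ) :=
    PiLp.continuousLinearEquiv 2 ℝ (fun _ : Fin N => ℝ) with hφ
  have hφF : ∀ k, φ (F k) = D.mulVec (u k) := fun k => rfl
  have hDu : Tendsto (fun k => D.mulVec (u k)) atTop (𝓝 (φ w)) := by
    have := (φ.continuous.tendsto w).comp hw
    exact this
  -- invertibility of D
  have hD' : Function.Injective D.mulVecLin := by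
    intro x y hxy
    exact hD (by simpa using hxy)
  have hDsurj : Function.Surjective D.mulVecLin :=
    LinearMap.injective_iff_surjective.mp hD'
  set Eh : (Fin N → ℝ) ≃ₗ[ℝ] (Fin N → ℝ) :=
    LinearEquiv.ofBijective D.mulVecLin ⟨hD', hDsurj⟩ with hEh
  have hEhap : ∀ x, Eh x = D.mulVec x := fun x => rfl
  have hEhsymm : ∀ x, Eh.symm (D.mulVec x) = x := by
    intro x
    rw [← hEhap x, LinearEquiv.symm_apply_apply]
  have hcontsymm : Continuous Eh.symm :=
    Eh.symm.toLinearMap.continuous_of_finiteDimensional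
  refine ⟨φ w, Eh.symm (φ w), ?_, ?_, ?_⟩
  · -- t converges to φ w
    -- the Euclidean version of t - D u
    have hG : Tendsto (fun k => (WithLp.equiv 2 (Fin N → ℝ)).symm
        (t (k + 2) - D.mulVec (u (k + 2)))) atTop (𝓝 0) := by
      rw [tendsto_zero_iff_norm_tendsto_zero]
      have hb : Tendsto (fun k : ℕ => (Real.sqrt C + Real.sqrt (2 * C)) * q (k + 1))
          atTop (𝓝 0) := by
        have h0 : Tendsto (fun k : ℕ => q (k + 1)) atTop (𝓝 0) :=
          (hsum.tendsto_atTop_zero).comp (tendsto_add_atTop_nat 1)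
        simpa using h0.const_mul (Real.sqrt C + Real.sqrt (2 * C))
      refine squeeze_zero (fun k => norm_nonneg _) (fun k => ?_) hb
      rw [← eucNorm_eq]
      exact htu2 k
    have hG' : Tendsto (fun k => t (k + 2) - D.mulVec (u (k + 2))) atTop (𝓝 0) := by
      have := (φ.continuous.tendsto 0).comp hG
      rw [map_zero] at this; exact this
    have h2 : Tendsto (fun k => D.mulVec (u (k + 2))) atTop (𝓝 (φ w)) :=
      hDu.comp (tendsto_add_atTop_nat 2)
    have h3 : Tendsto (fun k => t (k + 2)) atTop (𝓝 (φ w)) := by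
      have := hG'.add h2
      simpa using this
    exact (tendsto_add_atTop_iff_nat 2).mp h3
  · -- u converges
    have := (hcontsymm.tendsto (φ w)).comp hDu
    simpa [Function.comp_def, hEhsymm] using this
  · -- identification of the limits
    rw [← hEhap, LinearEquiv.apply_symm_apply]

lemma l0_le {n : ℕ} (v : Fin n → ℝ) : (l0 v : ℝ) ≤ n := by
  have : l0 v ≤ n := by
    have := Finset.card_filter_le (Finset.univ : Finset (Fin n)) (fun i => v i ≠ 0)
    simpa [l0] using this
  exact_mod_cast this


theorem anisotropic_ADMM_convergence (M N : ℕ) (A : Matrix (Fin M) (Fin N) ℝ)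
    (Dh Dv : Matrix (Fin N) (Fin N) ℝ) (g : Fin M → ℝ) (μ : ℝ) (hμ : 0 < μ)
    (t s u lt ls : ℕ → Fin N → ℝ) (βt βs : ℕ → ℝ)
    (hβt : ∀ k, 0 < βt k) (hβs : ∀ k, 0 < βs k)
    -- (i): t^{k+1} minimizes the anisotropic ℓ⁰ subproblem
    (ht : ∀ k, ∀ t' : Fin N → ℝ,
      μ * (l0 (t (k + 1)) : ℝ)
          + βt k / 2 * eucNorm (t (k + 1) - (Dh.mulVec (u k) + (βt k)⁻¹ • lt k)) ^ 2
        ≤ μ * (l0 t' : ℝ)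
          + βt k / 2 * eucNorm (t' - (Dh.mulVec (u k) + (βt k)⁻¹ • lt k)) ^ 2)
    -- (ii): s^{k+1} minimizes the anisotropic ℓ⁰ subproblem
    (hs : ∀ k, ∀ s' : Fin N → ℝ,
      μ * (l0 (s (k + 1)) : ℝ)
          + βs k / 2 * eucNorm (s (k + 1) - (Dv.mulVec (u k) + (βs k)⁻¹ • ls k)) ^ 2
        ≤ μ * (l0 s' : ℝ)
          + βs k / 2 * eucNorm (s' - (Dv.mulVec (u k) + (βs k)⁻¹ • ls k)) ^ 2)
    -- (iii): u^{k+1} minimizes the quadratic subproblem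
    (hu : ∀ k, ∀ v : Fin N → ℝ,
      1 / 2 * eucNorm (A.mulVec (u (k + 1)) - g) ^ 2
          + βt k / 2 * eucNorm (Dh.mulVec (u (k + 1)) - (t (k + 1) - (βt k)⁻¹ • lt k)) ^ 2
          + βs k / 2 * eucNorm (Dv.mulVec (u (k + 1)) - (s (k + 1) - (βs k)⁻¹ • ls k)) ^ 2
        ≤ 1 / 2 * eucNorm (A.mulVec v - g) ^ 2
          + βt k / 2 * eucNorm (Dh.mulVec v - (t (k + 1) - (βt k)⁻¹ • lt k)) ^ 2
          + βs k / 2 * eucNorm (Dv.mulVec v - (s (k + 1) - (βs k)⁻¹ • ls k)) ^ 2)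
    -- (iv): dual updates
    (hlt : ∀ k, lt (k + 1) = lt k - βt k • (t (k + 1) - Dh.mulVec (u (k + 1))))
    (hls : ∀ k, ls (k + 1) = ls k - βs k • (s (k + 1) - Dv.mulVec (u (k + 1))))
    -- (A.1): increasing penalties, summability, convergent ratio
    (hmonot : Monotone βt) (hmonos : Monotone βs)
    (hsumt : Summable fun k : ℕ => Real.sqrt ((k : ℝ) / βt k))
    (hsums : Summable fun k : ℕ => Real.sqrt ((k : ℝ) / βs k))
    (hratio : ∃ c : ℝ, c ≠ 0 ∧ Tendsto (fun k => βs k / βt k) atTop (𝓝 c))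
    -- (A.2): full rank
    (hDh : Function.Injective Dh.mulVec) (hDv : Function.Injective Dv.mulVec) :
    ∃ tstar sstar ustar : Fin N → ℝ,
      Tendsto t atTop (𝓝 tstar) ∧ Tendsto s atTop (𝓝 sstar) ∧
      Tendsto u atTop (𝓝 ustar) ∧
      tstar = Dh.mulVec ustar ∧ sstar = Dv.mulVec ustar := by
  have hμN : (0 : ℝ) ≤ μ * N := by positivity
  -- Step 1: the ℓ⁰-step residual bounds
  have hBt : ∀ k, βt k / 2
      * eucNorm (t (k + 1) - (Dh.mulVec (u k) + (βt k)⁻¹ • lt k)) ^ 2 ≤ μ * N := by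
    intro k
    have h := ht k (Dh.mulVec (u k) + (βt k)⁻¹ • lt k)
    rw [sub_self, eucNorm_zero] at h
    have h1 : μ * (l0 (Dh.mulVec (u k) + (βt k)⁻¹ • lt k) : ℝ) ≤ μ * N :=
      mul_le_mul_of_nonneg_left (l0_le _) hμ.le
    have h2 : (0 : ℝ) ≤ μ * (l0 (t (k + 1)) : ℝ) := by positivity
    nlinarith
  have hBs : ∀ k, βs k / 2
      * eucNorm (s (k + 1) - (Dv.mulVec (u k) + (βs k)⁻¹ • ls k)) ^ 2 ≤ μ * N := by
    intro k
    have h := hs k (Dv.mulVec (u k) + (βs k)⁻¹ • ls k)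
    rw [sub_self, eucNorm_zero] at h
    have h1 : μ * (l0 (Dv.mulVec (u k) + (βs k)⁻¹ • ls k) : ℝ) ≤ μ * N :=
      mul_le_mul_of_nonneg_left (l0_le _) hμ.le
    have h2 : (0 : ℝ) ≤ μ * (l0 (s (k + 1)) : ℝ) := by positivity
    nlinarith
  -- Step 2: energy estimates
  set En : ℕ → ℝ := fun k => eucNorm (A.mulVec (u k) - g) ^ 2 with hEn
  have hEn0 : ∀ k, 0 ≤ En k := fun k => sq_nonneg _
  have hkey : ∀ k, En (k + 1) ≤ En k + 4 * (μ * N) ∧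
      βt k * eucNorm (Dh.mulVec (u (k + 1)) - (t (k + 1) - (βt k)⁻¹ • lt k)) ^ 2
        ≤ En k + 4 * (μ * N) ∧
      βs k * eucNorm (Dv.mulVec (u (k + 1)) - (s (k + 1) - (βs k)⁻¹ • ls k)) ^ 2
        ≤ En k + 4 * (μ * N) := by
    intro k
    have h := hu k (u k)
    have e1 : Dh.mulVec (u k) - (t (k + 1) - (βt k)⁻¹ • lt k)
        = -(t (k + 1) - (Dh.mulVec (u k) + (βt k)⁻¹ • lt k)) := by abel
    have e2 : Dv.mulVec (u k) - (s (k + 1) - (βs k)⁻¹ • ls k)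
        = -(s (k + 1) - (Dv.mulVec (u k) + (βs k)⁻¹ • ls k)) := by abel
    rw [e1, e2, eucNorm_neg, eucNorm_neg] at h
    have hb1 := hBt k
    have hb2 := hBs k
    have p1 : 0 ≤ βt k / 2
        * eucNorm (Dh.mulVec (u (k + 1)) - (t (k + 1) - (βt k)⁻¹ • lt k)) ^ 2 := by
      have := (hβt k).le; positivity
    have p2 : 0 ≤ βs k / 2
        * eucNorm (Dv.mulVec (u (k + 1)) - (s (k + 1) - (βs k)⁻¹ • ls k)) ^ 2 := by
      have := (hβs k).le; positivity
    have p3 : 0 ≤ En (k + 1) := hEn0 (k + 1)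
    have q0 : En k = eucNorm (A.mulVec (u k) - g) ^ 2 := rfl
    have q1 : En (k + 1) = eucNorm (A.mulVec (u (k + 1)) - g) ^ 2 := rfl
    have r1 : βt k * eucNorm (Dh.mulVec (u (k + 1)) - (t (k + 1) - (βt k)⁻¹ • lt k)) ^ 2
        = 2 * (βt k / 2
          * eucNorm (Dh.mulVec (u (k + 1)) - (t (k + 1) - (βt k)⁻¹ • lt k)) ^ 2) := by ring
    have r2 : βs k * eucNorm (Dv.mulVec (u (k + 1)) - (s (k + 1) - (βs k)⁻¹ • ls k)) ^ 2
        = 2 * (βs k / 2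
          * eucNorm (Dv.mulVec (u (k + 1)) - (s (k + 1) - (βs k)⁻¹ • ls k)) ^ 2) := by ring
    refine ⟨by linarith, by linarith, by linarith⟩
  have hEnbound : ∀ k, En k ≤ En 0 + 4 * (μ * N) * k := by
    intro k
    induction k with
    | zero => simp
    | succ n ih =>
        have := (hkey n).1
        push_cast
        push_cast at ih
        linarith
  set C : ℝ := En 0 + 4 * (μ * N) with hC
  have hC0 : 0 ≤ C := by have := hEn0 0; rw [hC]; linarith
  have hAt : ∀ k, βt k
      * eucNorm (Dh.mulVec (u (k + 1)) - (t (k + 1) - (βt k)⁻¹ • lt k)) ^ 2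
      ≤ C * (k + 1) := by
    intro k
    have h1 := (hkey k).2.1
    have h2 := hEnbound k
    have h3 : (0 : ℝ) ≤ (k : ℝ) := Nat.cast_nonneg k
    have h4 : 0 ≤ En 0 := hEn0 0
    rw [hC]
    nlinarith
  have hAs : ∀ k, βs k
      * eucNorm (Dv.mulVec (u (k + 1)) - (s (k + 1) - (βs k)⁻¹ • ls k)) ^ 2
      ≤ C * (k + 1) := by
    intro k
    have h1 := (hkey k).2.2
    have h2 := hEnbound k
    have h3 : (0 : ℝ) ≤ (k : ℝ) := Nat.cast_nonneg k
    have h4 : 0 ≤ En 0 := hEn0 0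
    rw [hC]
    nlinarith
  obtain ⟨tstar, ustar₁, htt, hut1, heq1⟩ :=
    aux_converge Dh t u lt βt hβt hmonot hsumt (μ * N) C hμN hC0 hBt hAt hlt hDh
  obtain ⟨sstar, ustar₂, hst, hut2, heq2⟩ :=
    aux_converge Dv s u ls βs hβs hmonos hsums (μ * N) C hμN hC0 hBs hAs hls hDv
  have hus : ustar₁ = ustar₂ := tendsto_nhds_unique hut1 hut2
  exact ⟨tstar, sstar, ustar₁, htt, hst, hut1, heq1, by rw [hus]; exact heq2⟩
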